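/- If f is (h-s)₂-convex in the second sense, then (1/(b-a))∫_a^b f(x) dx ≤ [f(a)+f(b)] ∫_0^1 h(t)^s dt. -/

import Mathlib

open MeasureTheory

theorem hs2_convex_sum_bound (h : ℝ → ℝ) (s : ℝ) (f : ℝ → ℝ) (a b : ℝ)
    (hh : ∀ t ∈ Set.Icc (0:ℝ) 1, 0 ≤ h t)
    (hs : s ∈ Set.Ioc (0:ℝ) 1)
    (hf : ∀ x ∈ Set.Ici (0:ℝ), 0 ≤ f x)
    (hconv : ∀ x ∈ Set.Ici (0:ℝ), ∀ y ∈ Set.Ici (0:ℝ), ∀ t ∈ Set.Icc (0:ℝ) 1,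
      f (t * x + (1 - t) * y) ≤ h t ^ s * f x + h (1 - t) ^ s * f y)
    (ha : 0 ≤ a) (hab : a < b)
    (hfint : IntegrableOn f (Set.Icc a b))
    (hhint : IntegrableOn (fun t => h t ^ s) (Set.Icc (0:ℝ) 1)) :
    (1 / (b - a)) * ∫ x in a..b, f x ≤ (f a + f b) * ∫ t in (0:ℝ)..1, h t ^ s := by
  have hba : (0:ℝ) < b - a := by linarith
  have hfI : IntervalIntegrable f volume a b :=
    (intervalIntegrable_iff_integrableOn_Icc_of_le hab.le).mpr hfint
  have hhI : IntervalIntegrable (fun t => h t ^ s) volume 0 1 :=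
    (intervalIntegrable_iff_integrableOn_Icc_of_le (by norm_num)).mpr hhint
  -- integrability of the composed function on [0,1]
  have hgI : IntervalIntegrable (fun t => f ((b - a) * t + a)) volume 0 1 := by
    have h1 : IntervalIntegrable (fun x => f (x + a)) volume 0 (b - a) := by
      simpa using hfI.comp_add_right a
    have h2 := h1.comp_mul_left (c := b - a)
    simpa [div_self hba.ne'] using h2
  have hhI' : IntervalIntegrable (fun t => h (1 - t) ^ s) volume 0 1 := by
    simpa using (hhI.comp_sub_left 1).symm
  -- substitution
  have hsub : (∫ t in (0:ℝ)..1, f ((b - a) * t + a)) = (b - a)⁻¹ * ∫ x in a..b, f x := by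
    rw [intervalIntegral.integral_comp_mul_add f hba.ne' a]
    simp [smul_eq_mul]
  -- pointwise bound and integral comparison
  have hmono : (∫ t in (0:ℝ)..1, f ((b - a) * t + a))
      ≤ ∫ t in (0:ℝ)..1, (h t ^ s * f b + h (1 - t) ^ s * f a) := by
    apply intervalIntegral.integral_mono_on (by norm_num) hgI
    · exact (hhI.mul_const _).add (hhI'.mul_const _)
    · intro t ht
      have hb0 : b ∈ Set.Ici (0:ℝ) := le_trans ha hab.le
      have := hconv b hb0 a (by exact ha) t ht
      have heq : (b - a) * t + a = t * b + (1 - t) * a := by ring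
      rw [heq]
      exact this
  -- compute RHS integral
  have hre : (∫ t in (0:ℝ)..1, (h t ^ s * f b + h (1 - t) ^ s * f a))
      = (f a + f b) * ∫ t in (0:ℝ)..1, h t ^ s := by
    rw [intervalIntegral.integral_add (hhI.mul_const _) (hhI'.mul_const _),
      intervalIntegral.integral_mul_const, intervalIntegral.integral_mul_const]
    have : (∫ t in (0:ℝ)..1, h (1 - t) ^ s) = ∫ t in (0:ℝ)..1, h t ^ s := by
      simpa using intervalIntegral.integral_comp_sub_left (a:=(0:ℝ)) (b:=1) (fun t => h t ^ s) 1
    rw [this]; ring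
  calc (1 / (b - a)) * ∫ x in a..b, f x
      = ∫ t in (0:ℝ)..1, f ((b - a) * t + a) := by rw [hsub, one_div]
    _ ≤ _ := hmono
    _ = _ := hre
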